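/- Let g and g' be two independent such random vectors, let R, R' ∈ ℂ^{M×M} be Hermitian positive semidefinite with positive-semidefinite square roots, set h = R^{1/2} g and h' = R'^{1/2} g', and let B ∈ ℂ^{M×M} be arbitrary. Then E[|h'^H B h|²] = tr(B R B^H R'). -/

import Mathlib

open MeasureTheory ProbabilityTheory Matrix
open scoped ComplexOrder

section Aux

variable {Ω : Type*} [MeasurableSpace Ω] {μ : Measure Ω}

private lemma memL2_conj {f : Ω → ℂ} {p : ENNReal} (hf : MemLp f p μ) :
    MemLp (fun ω => (starRingEnd ℂ) (f ω)) p μ := by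
  refine ⟨Complex.continuous_conj.comp_aestronglyMeasurable hf.1, ?_⟩
  have h : eLpNorm (fun ω => (starRingEnd ℂ) (f ω)) p μ = eLpNorm f p μ :=
    eLpNorm_congr_norm_ae (Filter.Eventually.of_forall fun ω => by simp)
  rw [h]; exact hf.2

private lemma integrable_mul_of_memL2 {f g : Ω → ℂ}
    (hf : MemLp f 2 μ) (hg : MemLp g 2 μ) : Integrable (fun ω => f ω * g ω) μ := by
  have hf2 : Integrable (fun ω => ‖f ω‖ ^ 2) μ := (memLp_two_iff_integrable_sq_norm hf.1).mp hf
  have hg2 : Integrable (fun ω => ‖g ω‖ ^ 2) μ := (memLp_two_iff_integrable_sq_norm hg.1).mp hg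
  refine (hf2.add hg2).mono' (hf.1.mul hg.1) (Filter.Eventually.of_forall fun ω => ?_)
  simp only [norm_mul, Pi.add_apply]
  nlinarith [sq_nonneg (‖f ω‖ - ‖g ω‖), norm_nonneg (f ω), norm_nonneg (g ω),
    norm_nonneg (f ω * g ω)]

private lemma indepFun_integral_mul_complex [IsFiniteMeasure μ] {f g : Ω → ℂ}
    (h : IndepFun f g μ) (hf : Integrable f μ) (hg : Integrable g μ) :
    ∫ ω, f ω * g ω ∂μ = (∫ ω, f ω ∂μ) * ∫ ω, g ω ∂μ := by
  have hfm : AEMeasurable f μ := hf.1.aemeasurable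
  have hgm : AEMeasurable g μ := hg.1.aemeasurable
  have hmap : μ.map (fun ω => (f ω, g ω)) = (μ.map f).prod (μ.map g) :=
    (indepFun_iff_map_prod_eq_prod_map_map hfm hgm).mp h
  have hcont : AEStronglyMeasurable (fun p : ℂ × ℂ => p.1 * p.2)
      (μ.map (fun ω => (f ω, g ω))) :=
    (continuous_fst.mul continuous_snd).aestronglyMeasurable
  calc ∫ ω, f ω * g ω ∂μ = ∫ p, p.1 * p.2 ∂(μ.map fun ω => (f ω, g ω)) :=
        (integral_map (hfm.prodMk hgm) hcont).symm
    _ = ∫ p, p.1 * p.2 ∂((μ.map f).prod (μ.map g)) := by rw [hmap]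
    _ = (∫ x, x ∂(μ.map f)) * ∫ y, y ∂(μ.map g) :=
        integral_prod_mul (fun x : ℂ => x) (fun y : ℂ => y)
    _ = (∫ ω, f ω ∂μ) * ∫ ω, g ω ∂μ := by
        rw [integral_map (f := fun x : ℂ => x) hfm aestronglyMeasurable_id,
            integral_map (f := fun x : ℂ => x) hgm aestronglyMeasurable_id]

end Aux

/-- Let `G` be a family of `2M` mutually independent complex
random variables with the `CN(0,1)` moment conditions, giving two independent
vectors `g = G ∘ inl` and `g' = G ∘ inr`. Let `h = R^{1/2} g` and
`h' = R'^{1/2} g'` with `R, R'` Hermitian PSD. For any matrix `B`,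
`E[|h'ᴴ B h|²] = tr(B R Bᴴ R')`. -/
theorem cn_cross_quadratic_form_second_moment
    {Ω : Type*} [MeasurableSpace Ω] (μ : Measure Ω) [IsProbabilityMeasure μ]
    (M : ℕ) (G : (Fin M ⊕ Fin M) → Ω → ℂ)
    (hmeas : ∀ j, Measurable (G j))
    (hindep : iIndepFun G μ)
    (hL4 : ∀ j, MemLp (G j) 4 μ)
    (hmean : ∀ j, ∫ ω, G j ω ∂μ = 0)
    (hsq : ∀ j, ∫ ω, (G j ω) ^ 2 ∂μ = 0)
    (habs2 : ∀ j, ∫ ω, ‖G j ω‖ ^ 2 ∂μ = 1)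
    (habs4 : ∀ j, ∫ ω, ‖G j ω‖ ^ 4 ∂μ = 2)
    (R R' Rsqrt R'sqrt : Matrix (Fin M) (Fin M) ℂ)
    (hR : R.PosSemidef) (hR' : R'.PosSemidef)
    (hRsqrt : Rsqrt.PosSemidef) (hR'sqrt : R'sqrt.PosSemidef)
    (hRsq : Rsqrt * Rsqrt = R) (hR'sq : R'sqrt * R'sqrt = R')
    (B : Matrix (Fin M) (Fin M) ℂ)
    (h h' : Ω → Fin M → ℂ)
    (hh : ∀ ω, h ω = Rsqrt.mulVec (fun m => G (Sum.inl m) ω))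
    (hh' : ∀ ω, h' ω = R'sqrt.mulVec (fun m => G (Sum.inr m) ω)) :
    ((∫ ω, ‖star (h' ω) ⬝ᵥ B.mulVec (h ω)‖ ^ 2 ∂μ : ℝ) : ℂ) =
      (B * R * Bᴴ * R').trace := by
  classical
  set C : Matrix (Fin M) (Fin M) ℂ := R'sqrt * B * Rsqrt with hC
  have hL2 : ∀ j, MemLp (G j) 2 μ := fun j =>
    (hL4 j).mono_exponent (by norm_num)
  -- second moments, ℂ-valued
  have hmom1 : ∀ j, ∫ ω, (starRingEnd ℂ) (G j ω) * G j ω ∂μ = 1 := by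
    intro j
    have e : ∀ ω, (starRingEnd ℂ) (G j ω) * G j ω
        = ((‖G j ω‖ ^ 2 : ℝ) : ℂ) := by
      intro ω
      rw [Complex.sq_norm, mul_comm, Complex.mul_conj]
    simp_rw [e]
    rw [integral_complex_ofReal, habs2 j, Complex.ofReal_one]
  have hA2 : ∀ p r : Fin M,
      ∫ ω, (starRingEnd ℂ) (G (Sum.inr p) ω) * G (Sum.inr r) ω ∂μ
        = if p = r then 1 else 0 := by
    intro p r
    by_cases hpr : p = r
    · subst hpr; simp [hmom1]
    · have hind : IndepFun (fun ω => (starRingEnd ℂ) (G (Sum.inr p) ω)) (G (Sum.inr r)) μ :=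
        (hindep.indepFun (by simp [hpr])).comp Complex.continuous_conj.measurable measurable_id
      rw [indepFun_integral_mul_complex hind
        ((memL2_conj (hL2 _)).integrable one_le_two) ((hL2 _).integrable one_le_two)]
      rw [integral_conj, hmean, map_zero, zero_mul, if_neg hpr]
  have hA1 : ∀ q s : Fin M,
      ∫ ω, G (Sum.inl q) ω * (starRingEnd ℂ) (G (Sum.inl s) ω) ∂μ
        = if q = s then 1 else 0 := by
    intro q s
    by_cases hqs : q = s
    · subst hqs
      simp_rw [mul_comm (G (Sum.inl q) _)]
      simp [hmom1]
    · have hind : IndepFun (G (Sum.inl q)) (fun ω => (starRingEnd ℂ) (G (Sum.inl s) ω)) μ :=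
        (hindep.indepFun (by simp [hqs])).comp measurable_id Complex.continuous_conj.measurable
      rw [indepFun_integral_mul_complex hind
        ((hL2 _).integrable one_le_two) ((memL2_conj (hL2 _)).integrable one_le_two)]
      rw [hmean, zero_mul, if_neg hqs]
  -- independence of the two pair-factors
  have hind24 : ∀ p q r s : Fin M,
      IndepFun (fun ω => (starRingEnd ℂ) (G (Sum.inr p) ω) * G (Sum.inr r) ω)
        (fun ω => G (Sum.inl q) ω * (starRingEnd ℂ) (G (Sum.inl s) ω)) μ := by
    intro p q r s
    have hpair := hindep.indepFun_prodMk_prodMk hmeas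
      (Sum.inr p) (Sum.inr r) (Sum.inl q) (Sum.inl s)
      (by simp) (by simp) (by simp) (by simp)
    exact hpair.comp
      (((Complex.continuous_conj.comp continuous_fst).mul continuous_snd).measurable)
      ((continuous_fst.mul (Complex.continuous_conj.comp continuous_snd)).measurable)
  have hint2 : ∀ p r : Fin M,
      Integrable (fun ω => (starRingEnd ℂ) (G (Sum.inr p) ω) * G (Sum.inr r) ω) μ :=
    fun p r => integrable_mul_of_memL2 (memL2_conj (hL2 _)) (hL2 _)
  have hint1 : ∀ q s : Fin M,
      Integrable (fun ω => G (Sum.inl q) ω * (starRingEnd ℂ) (G (Sum.inl s) ω)) μ :=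
    fun q s => integrable_mul_of_memL2 (hL2 _) (memL2_conj (hL2 _))
  -- value of each fourth-order term
  have hterm : ∀ p q r s : Fin M,
      ∫ ω, ((starRingEnd ℂ) (G (Sum.inr p) ω) * G (Sum.inr r) ω)
          * (G (Sum.inl q) ω * (starRingEnd ℂ) (G (Sum.inl s) ω)) ∂μ
        = (if p = r then 1 else 0) * (if q = s then 1 else 0) := by
    intro p q r s
    rw [indepFun_integral_mul_complex (hind24 p q r s) (hint2 p r) (hint1 q s),
      hA2 p r, hA1 q s]
  -- integrability of each full summand
  have hintF : ∀ p q r s : Fin M,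
      Integrable (fun ω => (C p q * (starRingEnd ℂ) (C r s))
        * (((starRingEnd ℂ) (G (Sum.inr p) ω) * G (Sum.inr r) ω)
          * (G (Sum.inl q) ω * (starRingEnd ℂ) (G (Sum.inl s) ω)))) μ := by
    intro p q r s
    exact (((hind24 p q r s).integrable_mul (hint2 p r) (hint1 q s))).const_mul _
  -- pointwise identity for the bilinear form
  have hX : ∀ ω, star (h' ω) ⬝ᵥ B.mulVec (h ω)
      = ∑ p, ∑ q, (starRingEnd ℂ) (G (Sum.inr p) ω) * (C p q * G (Sum.inl q) ω) := by
    intro ω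
    rw [hh ω, hh' ω, star_mulVec, hR'sqrt.1, mulVec_mulVec, dotProduct_mulVec,
      vecMul_vecMul, ← mul_assoc, ← hC]
    simp only [dotProduct, vecMul, Pi.star_apply, RCLike.star_def, Finset.sum_mul]
    rw [Finset.sum_comm]
    exact Finset.sum_congr rfl fun p _ => Finset.sum_congr rfl fun q _ => by ring
  -- pointwise expansion of the squared modulus
  have hpt : ∀ ω, ((‖star (h' ω) ⬝ᵥ B.mulVec (h ω)‖ ^ 2 : ℝ) : ℂ)
      = ∑ p, ∑ r, ∑ q, ∑ s, (C p q * (starRingEnd ℂ) (C r s))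
          * (((starRingEnd ℂ) (G (Sum.inr p) ω) * G (Sum.inr r) ω)
            * (G (Sum.inl q) ω * (starRingEnd ℂ) (G (Sum.inl s) ω))) := by
    intro ω
    rw [Complex.sq_norm]
    rw [show ((Complex.normSq (star (h' ω) ⬝ᵥ B.mulVec (h ω)) : ℝ) : ℂ)
        = (star (h' ω) ⬝ᵥ B.mulVec (h ω))
          * (starRingEnd ℂ) (star (h' ω) ⬝ᵥ B.mulVec (h ω))
      from (Complex.mul_conj _).symm]
    rw [hX ω, map_sum, Finset.sum_mul_sum]
    refine Finset.sum_congr rfl fun p _ => Finset.sum_congr rfl fun r _ => ?_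
    rw [map_sum, Finset.sum_mul_sum]
    refine Finset.sum_congr rfl fun q _ => Finset.sum_congr rfl fun s _ => ?_
    simp only [_root_.map_mul, Complex.conj_conj]
    ring
  calc ((∫ ω, ‖star (h' ω) ⬝ᵥ B.mulVec (h ω)‖ ^ 2 ∂μ : ℝ) : ℂ)
      = ∫ ω, ∑ p, ∑ r, ∑ q, ∑ s, (C p q * (starRingEnd ℂ) (C r s))
          * (((starRingEnd ℂ) (G (Sum.inr p) ω) * G (Sum.inr r) ω)
            * (G (Sum.inl q) ω * (starRingEnd ℂ) (G (Sum.inl s) ω))) ∂μ := by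
        rw [← integral_complex_ofReal]
        exact integral_congr_ae (Filter.Eventually.of_forall fun ω => hpt ω)
    _ = ∑ p, ∑ r, ∑ q, ∑ s, (C p q * (starRingEnd ℂ) (C r s))
          * ((if p = r then 1 else 0) * (if q = s then 1 else 0)) := by
        rw [integral_finset_sum _ fun p _ => integrable_finset_sum _ fun r _ =>
          integrable_finset_sum _ fun q _ => integrable_finset_sum _ fun s _ => hintF p q r s]
        refine Finset.sum_congr rfl fun p _ => ?_
        rw [integral_finset_sum _ fun r _ => integrable_finset_sum _ fun q _ =>
          integrable_finset_sum _ fun s _ => hintF p q r s]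
        refine Finset.sum_congr rfl fun r _ => ?_
        rw [integral_finset_sum _ fun q _ => integrable_finset_sum _ fun s _ => hintF p q r s]
        refine Finset.sum_congr rfl fun q _ => ?_
        rw [integral_finset_sum _ fun s _ => hintF p q r s]
        refine Finset.sum_congr rfl fun s _ => ?_
        rw [integral_const_mul, hterm p q r s]
    _ = ∑ p, ∑ q, C p q * (starRingEnd ℂ) (C p q) := by
        refine Finset.sum_congr rfl fun p _ => ?_
        have e : ∀ r q s : Fin M, (C p q * (starRingEnd ℂ) (C r s))
            * ((if p = r then 1 else 0) * (if q = s then 1 else 0))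
            = if q = s then (if p = r then C p q * (starRingEnd ℂ) (C r s) else 0) else 0 := by
          intro r q s; split_ifs <;> ring
        simp_rw [e]
        simp only [Finset.sum_ite_eq, Finset.mem_univ, if_true]
        rw [Finset.sum_comm]
        simp only [Finset.sum_ite_eq, Finset.mem_univ, if_true]
    _ = (C * Cᴴ).trace := by
        simp [Matrix.trace, Matrix.mul_apply, Matrix.conjTranspose_apply, Matrix.diag,
          RCLike.star_def]
    _ = (B * R * Bᴴ * R').trace := by
        have hCH : Cᴴ = Rsqrt * (Bᴴ * R'sqrt) := by
          rw [hC, conjTranspose_mul, conjTranspose_mul, hRsqrt.1, hR'sqrt.1]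
        have e1 : C * Cᴴ = R'sqrt * (B * R * Bᴴ * R'sqrt) := by
          rw [hCH, hC, ← hRsq]
          simp only [mul_assoc]
        rw [e1, Matrix.trace_mul_comm, mul_assoc, hR'sq]
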